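/- Validity criterion via density (Parry). In the piecewise monotone setting, the φ-expansion is valid if and only if the set S is dense in [0,1]. Moreover, defining φ on dom φ := ⋃_{j∈A} (j + J_j) by φ(j+t) := f_j^{−1}(t) for t ∈ J_j, if φ is differentiable on its domain and sup_{t ∈ dom φ} |φ′(t)| < 1, then the φ-expansion is valid. -/
import Mathlib


open Set Filter Topology

/-- A piecewise monotone dynamical system on `[0,1]`: partition points
`0 = a 0 < a 1 < ⋯ < a k = 1` (`k ≥ 2`), branch intervals `I j = (a j, a (j+1))`,
on each of which `f j` is a continuous strictly monotone map into `[0,1]` with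
inverse `g j`; `inc j` records whether `f j` is increasing; the covering condition
`(⋃ᵢ Jᵢ) ∩ I j = I j` (i.e. `I j ⊆ ⋃ᵢ Jᵢ`) holds, where `J i = f i '' I i`. -/
structure PMS where
  k : ℕ
  a : ℕ → ℝ
  f : ℕ → ℝ → ℝ
  g : ℕ → ℝ → ℝ
  inc : ℕ → Bool
  two_le_k : 2 ≤ k
  a_zero : a 0 = 0
  a_last : a k = 1
  a_mono : ∀ i j, i < j → j ≤ k → a i < a j
  f_cont : ∀ j, j < k → ContinuousOn (f j) (Icc (a j) (a (j + 1)))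
  f_mono : ∀ j, j < k → inc j = true → StrictMonoOn (f j) (Icc (a j) (a (j + 1)))
  f_anti : ∀ j, j < k → inc j = false → StrictAntiOn (f j) (Icc (a j) (a (j + 1)))
  f_range : ∀ j, j < k → MapsTo (f j) (Icc (a j) (a (j + 1))) (Icc (0 : ℝ) 1)
  g_inv : ∀ j, j < k → ∀ t ∈ Icc (a j) (a (j + 1)), g j (f j t) = t
  cover : ∀ j, j < k →
    Ioo (a j) (a (j + 1)) ⊆ ⋃ i ∈ Finset.range k, f i '' Ioo (a i) (a (i + 1))

namespace PMS

/-- The open branch interval `I j = (a j, a (j+1))`. -/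
def I (P : PMS) (j : ℕ) : Set ℝ := Ioo (P.a j) (P.a (j + 1))

open Classical in
/-- The index of the branch interval containing `x` (junk value `0` if there is none). -/
noncomputable def idx (P : PMS) (x : ℝ) : ℕ :=
  if h : ∃ j, j < P.k ∧ x ∈ P.I j then h.choose else 0

open Classical in
/-- The dynamics: `T x = f j x` for `x ∈ I j` (junk value `0` on `S₀`, where `T` is
left undefined in the paper). -/
noncomputable def T (P : PMS) (x : ℝ) : ℝ :=
  if ∃ j, j < P.k ∧ x ∈ P.I j then P.f (P.idx x) x else 0

/-- `S₀ = [0,1] ∖ ⋃ⱼ I j`. -/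
def S0 (P : PMS) : Set ℝ := Icc 0 1 \ ⋃ j ∈ Finset.range P.k, P.I j

/-- The singular set `S`: points whose orbit hits `S₀`. -/
def S (P : PMS) : Set ℝ :=
  {x ∈ Icc (0 : ℝ) 1 | ∃ m, P.T^[m] x ∈ P.S0 ∧ ∀ i, i < m → P.T^[i] x ∉ P.S0}

/-- The coding map (itinerary): `(code x) n = j` iff `Tⁿ x ∈ I j` (for `x ∈ [0,1] ∖ S`). -/
noncomputable def code (P : PMS) (x : ℝ) : ℕ → ℕ := fun n => P.idx (P.T^[n] x)

/-- The map `φ̄` on `[0,k]` as a function of `j ∈ A` and `t ∈ [0,1]`, a point of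
`[j, j+1]` being written `j + t`. -/
noncomputable def phibarJ (P : PMS) (j : ℕ) (t : ℝ) : ℝ :=
  if P.inc j then
    if t ≤ P.f j (P.a j) then P.a j
    else if P.f j (P.a (j + 1)) ≤ t then P.a (j + 1)
    else P.g j t
  else
    if t ≤ P.f j (P.a (j + 1)) then P.a (j + 1)
    else if P.f j (P.a j) ≤ t then P.a j
    else P.g j t

/-- `φ̄ₙ(x) = φ̄(x₀ + φ̄(x₁ + ⋯ + φ̄(x_{n-1})⋯))`. -/
noncomputable def phibarN (P : PMS) : ℕ → (ℕ → ℕ) → ℝ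
  | 0, _ => 0
  | n + 1, x => P.phibarJ (x 0) (P.phibarN n fun i => x (i + 1))

/-- `φ̄_∞(x) = limₙ φ̄ₙ(x)` (a junk value where the limit does not exist). -/
noncomputable def phibarInf (P : PMS) (x : ℕ → ℕ) : ℝ :=
  limUnder atTop fun n => P.phibarN n x

/-- The φ-expansion is well-defined: `limₙ φ̄ₙ(x)` exists for every string `x ∈ A^ℕ`. -/
def WellDefined (P : PMS) : Prop :=
  ∀ x : ℕ → ℕ, (∀ n, x n < P.k) →
    ∃ L : ℝ, Tendsto (fun n => P.phibarN n x) atTop (𝓝 L)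

/-- The φ-expansion is valid: for every `x ∈ [0,1] ∖ S`, `limₙ φ̄ₙ(i(x)) = x`. -/
def Valid (P : PMS) : Prop :=
  ∀ x ∈ Icc (0 : ℝ) 1 \ P.S,
    Tendsto (fun n => P.phibarN n (P.code x)) atTop (𝓝 x)

end PMS

namespace PMS

/-- The domain of `φ`: `dom φ = ⋃ⱼ (j + J j)`, where `J j = f j '' I j`. -/
def domPhi (P : PMS) : Set ℝ :=
  ⋃ j ∈ Finset.range P.k, (fun t => (j : ℝ) + t) '' (P.f j '' P.I j)

open Classical in
/-- The index `j` such that `x ∈ j + J j` (junk value `0` if there is none). -/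
noncomputable def phiIdx (P : PMS) (x : ℝ) : ℕ :=
  if h : ∃ j, j < P.k ∧ x - (j : ℝ) ∈ P.f j '' P.I j then h.choose else 0

/-- The map `φ` on `dom φ`: `φ(j + t) = f j ⁻¹ (t)` for `t ∈ J j`. -/
noncomputable def phiMap (P : PMS) (x : ℝ) : ℝ :=
  P.g (P.phiIdx x) (x - (P.phiIdx x : ℝ))

end PMS

namespace PMS

variable (P : PMS)

/-! ### Basic facts about the partition -/

lemma a_le_a {i j : ℕ} (hij : i ≤ j) (hj : j ≤ P.k) : P.a i ≤ P.a j := by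
  rcases hij.lt_or_eq with h | h
  · exact (P.a_mono i j h hj).le
  · rw [h]

lemma a_lt_succ {j : ℕ} (hj : j < P.k) : P.a j < P.a (j + 1) :=
  P.a_mono j (j + 1) (Nat.lt_succ_self j) hj

lemma a_nonneg {j : ℕ} (hj : j ≤ P.k) : 0 ≤ P.a j := by
  have := P.a_le_a (Nat.zero_le j) hj
  rwa [P.a_zero] at this

lemma a_le_one {j : ℕ} (hj : j ≤ P.k) : P.a j ≤ 1 := by
  have := P.a_le_a hj le_rfl
  rwa [P.a_last] at this

lemma I_subset_Icc {j : ℕ} (hj : j < P.k) : P.I j ⊆ Icc (0:ℝ) 1 := fun x hx =>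
  ⟨(P.a_nonneg hj.le).trans hx.1.le, hx.2.le.trans (P.a_le_one hj)⟩

lemma exists_I_of_not_S0 {x : ℝ} (hx : x ∈ Icc (0:ℝ) 1) (hx0 : x ∉ P.S0) :
    ∃ j, j < P.k ∧ x ∈ P.I j := by
  have : x ∈ ⋃ j ∈ Finset.range P.k, P.I j := by
    by_contra h
    exact hx0 ⟨hx, h⟩
  simpa [Finset.mem_range] using this

lemma idx_spec {x : ℝ} (h : ∃ j, j < P.k ∧ x ∈ P.I j) :
    P.idx x < P.k ∧ x ∈ P.I (P.idx x) := by
  rw [idx, dif_pos h]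
  exact h.choose_spec

lemma I_disjoint {i j : ℕ} (hi : i < P.k) (hj : j < P.k) {x : ℝ}
    (hxi : x ∈ P.I i) (hxj : x ∈ P.I j) : i = j := by
  by_contra hne
  rcases Nat.lt_or_ge i j with h | h
  · have h2 : P.a (i + 1) ≤ P.a j := P.a_le_a h hj.le
    exact absurd (hxj.1.trans (hxi.2.trans_le h2)) (lt_irrefl _)
  · have hji : j < i := lt_of_le_of_ne h (Ne.symm hne)
    have h2 : P.a (j + 1) ≤ P.a i := P.a_le_a hji hi.le
    exact absurd (hxi.1.trans (hxj.2.trans_le h2)) (lt_irrefl _)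

lemma idx_eq {j : ℕ} (hj : j < P.k) {x : ℝ} (hx : x ∈ P.I j) : P.idx x = j := by
  obtain ⟨h1, h2⟩ := P.idx_spec ⟨j, hj, hx⟩
  exact P.I_disjoint h1 hj h2 hx

lemma T_eq {j : ℕ} (hj : j < P.k) {x : ℝ} (hx : x ∈ P.I j) : P.T x = P.f j x := by
  rw [T, if_pos ⟨j, hj, hx⟩, P.idx_eq hj hx]

lemma I_not_S0 {j : ℕ} (hj : j < P.k) {x : ℝ} (hx : x ∈ P.I j) : x ∉ P.S0 := fun hS0 =>
  hS0.2 (Set.mem_biUnion (Finset.mem_range.2 hj) hx)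

lemma S0_subset_S : P.S0 ⊆ P.S := by
  intro x hx
  exact ⟨hx.1, 0, by simpa using hx, fun i hi => absurd hi (Nat.not_lt_zero i)⟩

lemma not_S0_of_not_S {x : ℝ} (hx : x ∈ Icc (0:ℝ) 1) (hxS : x ∉ P.S) (n : ℕ) :
    P.T^[n] x ∉ P.S0 := by
  intro hn
  have hex : ∃ m, P.T^[m] x ∈ P.S0 := ⟨n, hn⟩
  classical
  exact hxS ⟨hx, Nat.find hex, Nat.find_spec hex, fun i hi => Nat.find_min hex hi⟩

lemma orbit_spec {x : ℝ} (hx : x ∈ Icc (0:ℝ) 1 \ P.S) (n : ℕ) :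
    P.T^[n] x ∈ Icc (0:ℝ) 1 ∧ P.code x n < P.k ∧ P.T^[n] x ∈ P.I (P.code x n) := by
  have hIcc : ∀ m, P.T^[m] x ∈ Icc (0:ℝ) 1 := by
    intro m
    induction m with
    | zero => simpa using hx.1
    | succ m ih =>
      obtain ⟨j, hj, hmem⟩ := P.exists_I_of_not_S0 ih (P.not_S0_of_not_S hx.1 hx.2 m)
      rw [Function.iterate_succ_apply', P.T_eq hj hmem]
      exact P.f_range j hj (Ioo_subset_Icc_self hmem)
  obtain ⟨j, hj, hmem⟩ := P.exists_I_of_not_S0 (hIcc n) (P.not_S0_of_not_S hx.1 hx.2 n)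
  have h := P.idx_spec ⟨j, hj, hmem⟩
  exact ⟨hIcc n, h.1, h.2⟩

lemma T_mem_diff {x : ℝ} (hx : x ∈ Icc (0:ℝ) 1 \ P.S) : P.T x ∈ Icc (0:ℝ) 1 \ P.S := by
  have h1 := P.orbit_spec hx 1
  have h0 := P.orbit_spec hx 0
  refine ⟨by simpa using h1.1, ?_⟩
  rintro ⟨hIcc, m, hm, hmin⟩
  refine hx.2 ⟨hx.1, m + 1, ?_, ?_⟩
  · rwa [Function.iterate_succ_apply]
  · intro i hi
    cases i with
    | zero => exact P.I_not_S0 h0.2.1 h0.2.2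
    | succ i =>
      rw [Function.iterate_succ_apply]
      exact hmin i (by omega)

lemma T_notMem_S {y : ℝ} (hy : y ∈ Icc (0:ℝ) 1) (hy0 : y ∉ P.S0) (hyS : y ∉ P.S) :
    P.T y ∉ P.S := by
  rintro ⟨hIcc, m, hm, hmin⟩
  refine hyS ⟨hy, m + 1, by rwa [Function.iterate_succ_apply], ?_⟩
  intro i hi
  cases i with
  | zero => exact hy0
  | succ i =>
    rw [Function.iterate_succ_apply]
    exact hmin i (by omega)

lemma code_shift (x : ℝ) : P.code (P.T x) = fun n => P.code x (n + 1) := by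
  funext n
  simp only [code]
  rw [Function.iterate_succ_apply]

end PMS
namespace PMS

variable (P : PMS)

/-! ### `phibarJ` -/

lemma fA_lt_fB {j : ℕ} (hj : j < P.k) (hinc : P.inc j = true) :
    P.f j (P.a j) < P.f j (P.a (j + 1)) :=
  P.f_mono j hj hinc (left_mem_Icc.2 (P.a_lt_succ hj).le)
    (right_mem_Icc.2 (P.a_lt_succ hj).le) (P.a_lt_succ hj)

lemma fB_lt_fA {j : ℕ} (hj : j < P.k) (hinc : P.inc j = false) :
    P.f j (P.a (j + 1)) < P.f j (P.a j) :=
  P.f_anti j hj hinc (left_mem_Icc.2 (P.a_lt_succ hj).le)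
    (right_mem_Icc.2 (P.a_lt_succ hj).le) (P.a_lt_succ hj)

lemma phibarJ_low_inc {j : ℕ} {t : ℝ} (hinc : P.inc j = true) (ht : t ≤ P.f j (P.a j)) :
    P.phibarJ j t = P.a j := by
  rw [phibarJ, if_pos hinc, if_pos ht]

lemma phibarJ_high_inc {j : ℕ} {t : ℝ} (hj : j < P.k) (hinc : P.inc j = true)
    (ht : P.f j (P.a (j + 1)) ≤ t) : P.phibarJ j t = P.a (j + 1) := by
  have h := P.fA_lt_fB hj hinc
  rw [phibarJ, if_pos hinc, if_neg (by linarith), if_pos ht]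

lemma phibarJ_mid_inc {j : ℕ} {t : ℝ} (hinc : P.inc j = true)
    (ht : t ∈ Ioo (P.f j (P.a j)) (P.f j (P.a (j + 1)))) : P.phibarJ j t = P.g j t := by
  rw [phibarJ, if_pos hinc, if_neg (not_le.2 ht.1), if_neg (not_le.2 ht.2)]

lemma phibarJ_low_anti {j : ℕ} {t : ℝ} (hinc : P.inc j = false)
    (ht : t ≤ P.f j (P.a (j + 1))) : P.phibarJ j t = P.a (j + 1) := by
  rw [phibarJ, if_neg (by simp [hinc]), if_pos ht]

lemma phibarJ_high_anti {j : ℕ} {t : ℝ} (hj : j < P.k) (hinc : P.inc j = false)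
    (ht : P.f j (P.a j) ≤ t) : P.phibarJ j t = P.a j := by
  have h := P.fB_lt_fA hj hinc
  rw [phibarJ, if_neg (by simp [hinc]), if_neg (by linarith), if_pos ht]

lemma phibarJ_mid_anti {j : ℕ} {t : ℝ} (hinc : P.inc j = false)
    (ht : t ∈ Ioo (P.f j (P.a (j + 1))) (P.f j (P.a j))) : P.phibarJ j t = P.g j t := by
  rw [phibarJ, if_neg (by simp [hinc]), if_neg (not_le.2 ht.1), if_neg (not_le.2 ht.2)]

lemma mid_preimage_inc {j : ℕ} {t : ℝ} (hj : j < P.k) (hinc : P.inc j = true)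
    (ht : t ∈ Ioo (P.f j (P.a j)) (P.f j (P.a (j + 1)))) :
    ∃ s ∈ P.I j, P.f j s = t ∧ P.g j t = s := by
  obtain ⟨s, hs, hfs⟩ := intermediate_value_Ioo (P.a_lt_succ hj).le (P.f_cont j hj) ht
  exact ⟨s, hs, hfs, by rw [← hfs, P.g_inv j hj s (Ioo_subset_Icc_self hs)]⟩

lemma mid_preimage_anti {j : ℕ} {t : ℝ} (hj : j < P.k) (hinc : P.inc j = false)
    (ht : t ∈ Ioo (P.f j (P.a (j + 1))) (P.f j (P.a j))) :
    ∃ s ∈ P.I j, P.f j s = t ∧ P.g j t = s := by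
  obtain ⟨s, hs, hfs⟩ := intermediate_value_Ioo' (P.a_lt_succ hj).le (P.f_cont j hj) ht
  exact ⟨s, hs, hfs, by rw [← hfs, P.g_inv j hj s (Ioo_subset_Icc_self hs)]⟩

lemma phibarJ_mem {j : ℕ} (hj : j < P.k) (t : ℝ) :
    P.phibarJ j t ∈ Icc (P.a j) (P.a (j + 1)) := by
  have hab := (P.a_lt_succ hj).le
  cases hb : P.inc j with
  | true =>
    rcases le_or_gt t (P.f j (P.a j)) with h1 | h1
    · rw [P.phibarJ_low_inc hb h1]; exact left_mem_Icc.2 hab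
    rcases le_or_gt (P.f j (P.a (j + 1))) t with h2 | h2
    · rw [P.phibarJ_high_inc hj hb h2]; exact right_mem_Icc.2 hab
    · obtain ⟨s, hs, _, hgs⟩ := P.mid_preimage_inc hj hb ⟨h1, h2⟩
      rw [P.phibarJ_mid_inc hb ⟨h1, h2⟩, hgs]
      exact Ioo_subset_Icc_self hs
  | false =>
    rcases le_or_gt t (P.f j (P.a (j + 1))) with h1 | h1
    · rw [P.phibarJ_low_anti hb h1]; exact right_mem_Icc.2 hab
    rcases le_or_gt (P.f j (P.a j)) t with h2 | h2
    · rw [P.phibarJ_high_anti hj hb h2]; exact left_mem_Icc.2 hab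
    · obtain ⟨s, hs, _, hgs⟩ := P.mid_preimage_anti hj hb ⟨h1, h2⟩
      rw [P.phibarJ_mid_anti hb ⟨h1, h2⟩, hgs]
      exact Ioo_subset_Icc_self hs

lemma phibarJ_mem01 {j : ℕ} (hj : j < P.k) (t : ℝ) : P.phibarJ j t ∈ Icc (0:ℝ) 1 :=
  ⟨(P.a_nonneg hj.le).trans (P.phibarJ_mem hj t).1,
    (P.phibarJ_mem hj t).2.trans (P.a_le_one hj)⟩

lemma phibarJ_mono {j : ℕ} (hj : j < P.k) (hinc : P.inc j = true) :
    Monotone (P.phibarJ j) := by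
  intro t₁ t₂ h
  rcases le_or_gt t₁ (P.f j (P.a j)) with h1 | h1
  · rw [P.phibarJ_low_inc hinc h1]
    exact (P.phibarJ_mem hj t₂).1
  rcases le_or_gt (P.f j (P.a (j + 1))) t₁ with h2 | h2
  · rw [P.phibarJ_high_inc hj hinc h2, P.phibarJ_high_inc hj hinc (h2.trans h)]
  obtain ⟨s₁, hs₁, hfs₁, hg₁⟩ := P.mid_preimage_inc hj hinc ⟨h1, h2⟩
  rw [P.phibarJ_mid_inc hinc ⟨h1, h2⟩, hg₁]
  rcases le_or_gt (P.f j (P.a (j + 1))) t₂ with h3 | h3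
  · rw [P.phibarJ_high_inc hj hinc h3]; exact hs₁.2.le
  · have h4 : P.f j (P.a j) < t₂ := lt_of_lt_of_le h1 h
    obtain ⟨s₂, hs₂, hfs₂, hg₂⟩ := P.mid_preimage_inc hj hinc ⟨h4, h3⟩
    rw [P.phibarJ_mid_inc hinc ⟨h4, h3⟩, hg₂]
    by_contra hc
    push_neg at hc
    have := P.f_mono j hj hinc (Ioo_subset_Icc_self hs₂) (Ioo_subset_Icc_self hs₁) hc
    rw [hfs₁, hfs₂] at this
    exact absurd h (not_le.2 this)

lemma phibarJ_anti {j : ℕ} (hj : j < P.k) (hinc : P.inc j = false) :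
    Antitone (P.phibarJ j) := by
  intro t₁ t₂ h
  rcases le_or_gt t₁ (P.f j (P.a (j + 1))) with h1 | h1
  · rw [P.phibarJ_low_anti hinc h1]
    exact (P.phibarJ_mem hj t₂).2
  rcases le_or_gt (P.f j (P.a j)) t₁ with h2 | h2
  · rw [P.phibarJ_high_anti hj hinc h2, P.phibarJ_high_anti hj hinc (h2.trans h)]
  obtain ⟨s₁, hs₁, hfs₁, hg₁⟩ := P.mid_preimage_anti hj hinc ⟨h1, h2⟩
  rw [P.phibarJ_mid_anti hinc ⟨h1, h2⟩, hg₁]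
  rcases le_or_gt (P.f j (P.a j)) t₂ with h3 | h3
  · rw [P.phibarJ_high_anti hj hinc h3]; exact hs₁.1.le
  · have h4 : P.f j (P.a (j + 1)) < t₂ := lt_of_lt_of_le h1 h
    obtain ⟨s₂, hs₂, hfs₂, hg₂⟩ := P.mid_preimage_anti hj hinc ⟨h4, h3⟩
    rw [P.phibarJ_mid_anti hinc ⟨h4, h3⟩, hg₂]
    by_contra hc
    push_neg at hc
    have := P.f_anti j hj hinc (Ioo_subset_Icc_self hs₁) (Ioo_subset_Icc_self hs₂) hc
    rw [hfs₁, hfs₂] at this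
    exact absurd h (not_le.2 this)

lemma phibarJ_mono_or_anti {j : ℕ} (hj : j < P.k) :
    Monotone (P.phibarJ j) ∨ Antitone (P.phibarJ j) := by
  cases hb : P.inc j with
  | true => exact Or.inl (P.phibarJ_mono hj hb)
  | false => exact Or.inr (P.phibarJ_anti hj hb)

lemma phibarJ_fixed {j : ℕ} {y : ℝ} (hj : j < P.k) (hy : y ∈ P.I j) :
    P.phibarJ j (P.f j y) = y := by
  have hyI := Ioo_subset_Icc_self hy
  have hab := (P.a_lt_succ hj).le
  cases hb : P.inc j with
  | true =>
    have h1 : P.f j (P.a j) < P.f j y := P.f_mono j hj hb (left_mem_Icc.2 hab) hyI hy.1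
    have h2 : P.f j y < P.f j (P.a (j + 1)) := P.f_mono j hj hb hyI (right_mem_Icc.2 hab) hy.2
    rw [P.phibarJ_mid_inc hb ⟨h1, h2⟩, P.g_inv j hj y hyI]
  | false =>
    have h1 : P.f j (P.a (j + 1)) < P.f j y := P.f_anti j hj hb hyI (right_mem_Icc.2 hab) hy.2
    have h2 : P.f j y < P.f j (P.a j) := P.f_anti j hj hb (left_mem_Icc.2 hab) hyI hy.1
    rw [P.phibarJ_mid_anti hb ⟨h1, h2⟩, P.g_inv j hj y hyI]

lemma sandwich_step {j : ℕ} (hj : j < P.k) {s s' y : ℝ}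
    (h1 : min (P.phibarJ j s) (P.phibarJ j s') < y)
    (h2 : y < max (P.phibarJ j s) (P.phibarJ j s')) :
    y ∈ P.I j ∧ min s s' < P.f j y ∧ P.f j y < max s s' := by
  have hmem : y ∈ P.I j := by
    constructor
    · exact lt_of_le_of_lt (le_min (P.phibarJ_mem hj s).1 (P.phibarJ_mem hj s').1) h1
    · exact lt_of_lt_of_le h2 (max_le (P.phibarJ_mem hj s).2 (P.phibarJ_mem hj s').2)
  have hfix : P.phibarJ j (P.f j y) = y := P.phibarJ_fixed hj hmem
  rw [← hfix] at h1 h2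
  refine ⟨hmem, ?_, ?_⟩
  · rcases P.phibarJ_mono_or_anti hj with hm | hm
    · rcases le_total (P.phibarJ j s) (P.phibarJ j s') with h | h
      · rw [min_eq_left h] at h1
        exact lt_of_le_of_lt (min_le_left s s') (hm.reflect_lt h1)
      · rw [min_eq_right h] at h1
        exact lt_of_le_of_lt (min_le_right s s') (hm.reflect_lt h1)
    · rcases le_total (P.phibarJ j s) (P.phibarJ j s') with h | h
      · rw [max_eq_right h] at h2
        exact lt_of_le_of_lt (min_le_right s s') (hm.reflect_lt h2)
      · rw [max_eq_left h] at h2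
        exact lt_of_le_of_lt (min_le_left s s') (hm.reflect_lt h2)
  · rcases P.phibarJ_mono_or_anti hj with hm | hm
    · rcases le_total (P.phibarJ j s) (P.phibarJ j s') with h | h
      · rw [max_eq_right h] at h2
        exact lt_of_lt_of_le (hm.reflect_lt h2) (le_max_right s s')
      · rw [max_eq_left h] at h2
        exact lt_of_lt_of_le (hm.reflect_lt h2) (le_max_left s s')
    · rcases le_total (P.phibarJ j s) (P.phibarJ j s') with h | h
      · rw [min_eq_left h] at h1
        exact lt_of_lt_of_le (hm.reflect_lt h1) (le_max_left s s')
      · rw [min_eq_right h] at h1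
        exact lt_of_lt_of_le (hm.reflect_lt h1) (le_max_right s s')

end PMS
namespace PMS

variable (P : PMS)

/-! ### The outer compositions `PsiN` -/

/-- `PsiN n x t = φ̄(x₀ + φ̄(x₁ + ⋯ + φ̄(x_{n-1} + t)⋯))`. -/
noncomputable def PsiN (P : PMS) : ℕ → (ℕ → ℕ) → ℝ → ℝ
  | 0, _, t => t
  | n + 1, x, t => P.phibarJ (x 0) (P.PsiN n (fun i => x (i + 1)) t)

lemma phibarN_eq_PsiN (n : ℕ) (x : ℕ → ℕ) : P.phibarN n x = P.PsiN n x 0 := by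
  induction n generalizing x with
  | zero => rfl
  | succ n ih => simp only [phibarN, PsiN, ih]

lemma PsiN_exact {x : ℝ} (hx : x ∈ Icc (0:ℝ) 1 \ P.S) (n : ℕ) :
    P.PsiN n (P.code x) (P.T^[n] x) = x := by
  induction n generalizing x with
  | zero => rfl
  | succ n ih =>
    have h0 := P.orbit_spec hx 0
    have hTx := P.T_mem_diff hx
    have e : P.PsiN (n + 1) (P.code x) (P.T^[n + 1] x)
        = P.phibarJ (P.code x 0) (P.PsiN n (P.code (P.T x)) (P.T^[n] (P.T x))) := by
      rw [Function.iterate_succ_apply]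
      simp only [PsiN]
      rw [← P.code_shift x]
    rw [e, ih hTx]
    have hTxx : P.T x = P.f (P.code x 0) x := P.T_eq h0.2.1 h0.2.2
    rw [hTxx]
    exact P.phibarJ_fixed h0.2.1 h0.2.2

lemma PsiN_succ_inner (n : ℕ) (x : ℕ → ℕ) (t : ℝ) :
    P.PsiN (n + 1) x t = P.PsiN n x (P.phibarJ (x n) t) := by
  induction n generalizing x with
  | zero => rfl
  | succ n ih =>
    show P.phibarJ (x 0) (P.PsiN (n + 1) (fun i => x (i + 1)) t)
        = P.phibarJ (x 0) (P.PsiN n (fun i => x (i + 1)) (P.phibarJ (x (n + 1)) t))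
    rw [ih]

lemma PsiN_between (n : ℕ) (x : ℕ → ℕ) (hx : ∀ i, x i < P.k) {t : ℝ}
    (ht : t ∈ Icc (0:ℝ) 1) :
    min (P.PsiN n x 0) (P.PsiN n x 1) ≤ P.PsiN n x t ∧
      P.PsiN n x t ≤ max (P.PsiN n x 0) (P.PsiN n x 1) := by
  induction n generalizing x with
  | zero =>
    have h1 : min (0:ℝ) 1 = 0 := min_eq_left zero_le_one
    have h2 : max (0:ℝ) 1 = 1 := max_eq_right zero_le_one
    simp only [PsiN, h1, h2]
    exact ⟨ht.1, ht.2⟩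
  | succ n ih =>
    obtain ⟨h1, h2⟩ := ih (fun i => x (i + 1)) (fun i => hx (i + 1))
    simp only [PsiN]
    rcases P.phibarJ_mono_or_anti (hx 0) with hm | hm
    · exact ⟨by rw [← hm.map_min]; exact hm h1, by rw [← hm.map_max]; exact hm h2⟩
    · exact ⟨by rw [← hm.map_max]; exact hm h2, by rw [← hm.map_min]; exact hm h1⟩

lemma L_mono_R_anti (x : ℕ → ℕ) (hx : ∀ i, x i < P.k) (n : ℕ) :
    min (P.PsiN n x 0) (P.PsiN n x 1) ≤ min (P.PsiN (n + 1) x 0) (P.PsiN (n + 1) x 1) ∧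
      max (P.PsiN (n + 1) x 0) (P.PsiN (n + 1) x 1) ≤ max (P.PsiN n x 0) (P.PsiN n x 1) := by
  have h0 := P.PsiN_between n x hx (P.phibarJ_mem01 (hx n) 0)
  have h1 := P.PsiN_between n x hx (P.phibarJ_mem01 (hx n) 1)
  rw [P.PsiN_succ_inner n x 0, P.PsiN_succ_inner n x 1]
  exact ⟨le_min h0.1 h1.1, max_le h0.2 h1.2⟩

lemma orbit_of_strict_sandwich {x y : ℝ} (hx : x ∈ Icc (0:ℝ) 1 \ P.S)
    (hy : ∀ n, min (P.PsiN n (P.code x) 0) (P.PsiN n (P.code x) 1) < y ∧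
        y < max (P.PsiN n (P.code x) 0) (P.PsiN n (P.code x) 1)) (m : ℕ) :
    P.T^[m] y ∈ P.I (P.code x m) := by
  induction m generalizing x y with
  | zero =>
    have h1 := hy 1
    simp only [PsiN] at h1
    exact (P.sandwich_step (P.orbit_spec hx 0).2.1 h1.1 h1.2).1
  | succ m ih =>
    have hj0 := (P.orbit_spec hx 0).2.1
    have hstep : ∀ n : ℕ, y ∈ P.I (P.code x 0) ∧
        min (P.PsiN n (fun i => P.code x (i + 1)) 0) (P.PsiN n (fun i => P.code x (i + 1)) 1)
          < P.f (P.code x 0) y ∧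
        P.f (P.code x 0) y
          < max (P.PsiN n (fun i => P.code x (i + 1)) 0)
              (P.PsiN n (fun i => P.code x (i + 1)) 1) := by
      intro n
      have h := hy (n + 1)
      simp only [PsiN] at h
      exact P.sandwich_step hj0 h.1 h.2
    have hyI : y ∈ P.I (P.code x 0) := (hstep 0).1
    have hTy : P.T y = P.f (P.code x 0) y := P.T_eq hj0 hyI
    have hTx := P.T_mem_diff hx
    have ihp := ih hTx (y := P.T y) ?_
    · have e : P.code (P.T x) m = P.code x (m + 1) := congrFun (P.code_shift x) m
      rw [Function.iterate_succ_apply, ← e]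
      exact ihp
    · intro n
      rw [P.code_shift x, hTy]
      exact ⟨(hstep n).2.1, (hstep n).2.2⟩

lemma notMem_S_of_strict_sandwich {x y : ℝ} (hx : x ∈ Icc (0:ℝ) 1 \ P.S)
    (hy : ∀ n, min (P.PsiN n (P.code x) 0) (P.PsiN n (P.code x) 1) < y ∧
        y < max (P.PsiN n (P.code x) 0) (P.PsiN n (P.code x) 1)) : y ∉ P.S := by
  rintro ⟨hIcc, m, hm, -⟩
  exact P.I_not_S0 (P.orbit_spec hx m).2.1 (P.orbit_of_strict_sandwich hx hy m) hm

end PMS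
namespace PMS

variable (P : PMS)

/-! ### Density implies validity -/

lemma valid_of_dense (hd : Icc (0:ℝ) 1 ⊆ closure P.S) : P.Valid := by
  intro x hx
  have hck : ∀ i, P.code x i < P.k := fun i => (P.orbit_spec hx i).2.1
  set L : ℕ → ℝ := fun n => min (P.PsiN n (P.code x) 0) (P.PsiN n (P.code x) 1) with hLdef
  set R : ℕ → ℝ := fun n => max (P.PsiN n (P.code x) 0) (P.PsiN n (P.code x) 1) with hRdef
  have hLmono : Monotone L :=
    monotone_nat_of_le_succ fun n => (P.L_mono_R_anti (P.code x) hck n).1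
  have hRanti : Antitone R :=
    antitone_nat_of_succ_le fun n => (P.L_mono_R_anti (P.code x) hck n).2
  have hLx : ∀ n, L n ≤ x ∧ x ≤ R n := by
    intro n
    have h := P.PsiN_between n (P.code x) hck (P.orbit_spec hx n).1
    rw [P.PsiN_exact hx n] at h
    exact h
  have hL0 : L 0 = 0 := by
    simp only [hLdef, PsiN]
    exact min_eq_left zero_le_one
  have hR0 : R 0 = 1 := by
    simp only [hRdef, PsiN]
    exact max_eq_right zero_le_one
  have hbddA : BddAbove (Set.range L) := by
    refine ⟨1, ?_⟩
    rintro _ ⟨n, rfl⟩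
    exact (hLx n).1.trans hx.1.2
  have hbddB : BddBelow (Set.range R) := by
    refine ⟨0, ?_⟩
    rintro _ ⟨n, rfl⟩
    exact hx.1.1.trans (hLx n).2
  have hu : Tendsto L atTop (𝓝 (⨆ n, L n)) := tendsto_atTop_ciSup hLmono hbddA
  have hv : Tendsto R atTop (𝓝 (⨅ n, R n)) := tendsto_atTop_ciInf hRanti hbddB
  set u := ⨆ n, L n with hudef
  set v := ⨅ n, R n with hvdef
  have hun : ∀ n, L n ≤ u := fun n => le_ciSup hbddA n
  have hvn : ∀ n, v ≤ R n := fun n => ciInf_le hbddB n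
  have hux : u ≤ x := ciSup_le fun n => (hLx n).1
  have hxv : x ≤ v := le_ciInf fun n => (hLx n).2
  have huv : u = v := by
    by_contra hne
    have hlt : u < v := lt_of_le_of_ne (hux.trans hxv) hne
    set y := (u + v) / 2 with hydef
    have hy1 : u < y := by rw [hydef]; linarith
    have hy2 : y < v := by rw [hydef]; linarith
    have hsand : ∀ z, u < z → z < v → z ∉ P.S := fun z hz1 hz2 =>
      P.notMem_S_of_strict_sandwich hx
        (fun n => ⟨lt_of_le_of_lt (hun n) hz1, lt_of_lt_of_le hz2 (hvn n)⟩)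
    have hy01 : y ∈ Icc (0:ℝ) 1 := by
      constructor
      · have := hun 0; rw [hL0] at this; linarith
      · have := hvn 0; rw [hR0] at this; linarith
    have hmem := hd hy01
    rw [mem_closure_iff] at hmem
    obtain ⟨s, hsO, hsS⟩ := hmem (Ioo u v) isOpen_Ioo ⟨hy1, hy2⟩
    exact hsand s hsO.1 hsO.2 hsS
  have hx_eq : u = x := le_antisymm hux (by rw [huv]; exact hxv)
  have hv_eq : v = x := by rw [← huv, hx_eq]
  have hu' : Tendsto L atTop (𝓝 x) := by rwa [hx_eq] at hu
  have hv' : Tendsto R atTop (𝓝 x) := by rwa [hv_eq] at hv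
  have hsq : Tendsto (fun n => P.PsiN n (P.code x) 0) atTop (𝓝 x) :=
    tendsto_of_tendsto_of_tendsto_of_le_of_le hu' hv'
      (fun n => min_le_left _ _) (fun n => le_max_left _ _)
  simpa only [P.phibarN_eq_PsiN] using hsq

end PMS
namespace PMS

variable (P : PMS)

/-! ### Validity implies density -/

lemma a_notMem_I {i j : ℕ} (hik : i ≤ P.k) (hj : j < P.k) : P.a i ∉ P.I j := by
  intro h
  rcases Nat.lt_or_ge i (j + 1) with hij | hij
  · have := P.a_le_a (Nat.lt_succ_iff.1 hij) hj.le
    exact absurd h.1 (not_lt.2 this)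
  · have := P.a_le_a hij hik
    exact absurd h.2 (not_lt.2 this)

lemma a_mem_S0 {i : ℕ} (hik : i ≤ P.k) : P.a i ∈ P.S0 := by
  refine ⟨⟨P.a_nonneg hik, P.a_le_one hik⟩, ?_⟩
  intro h
  obtain ⟨j, hj, hmem⟩ : ∃ j, j < P.k ∧ P.a i ∈ P.I j := by
    simpa [Finset.mem_range] using h
  exact P.a_notMem_I hik hj hmem

lemma zero_mem_S : (0:ℝ) ∈ P.S := by
  have := P.S0_subset_S (P.a_mem_S0 (Nat.zero_le P.k))
  rwa [P.a_zero] at this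

lemma one_mem_S : (1:ℝ) ∈ P.S := by
  have := P.S0_subset_S (P.a_mem_S0 (le_refl P.k))
  rwa [P.a_last] at this

lemma interval_step {γ δ : ℝ} (hγδ : γ < δ) (hIcc : Icc γ δ ⊆ Icc (0:ℝ) 1)
    (hS : ∀ y ∈ Ioo γ δ, y ∉ P.S) :
    ∃ j, j < P.k ∧ Ioo γ δ ⊆ P.I j ∧ ∃ γ' δ', γ' < δ' ∧ Icc γ' δ' ⊆ Icc (0:ℝ) 1 ∧
      (∀ y ∈ Ioo γ' δ', y ∉ P.S) ∧ ∀ y ∈ Ioo γ δ, P.T y ∈ Ioo γ' δ' := by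
  have hmemI : ∀ y ∈ Ioo γ δ, ∃ j, j < P.k ∧ y ∈ P.I j := fun y hy =>
    P.exists_I_of_not_S0 (hIcc (Ioo_subset_Icc_self hy))
      (fun h0 => hS y hy (P.S0_subset_S h0))
  have hy₀mem : (γ + δ) / 2 ∈ Ioo γ δ := ⟨by linarith, by linarith⟩
  obtain ⟨j, hj, hy₀⟩ := hmemI ((γ + δ) / 2) hy₀mem
  have hsub : Ioo γ δ ⊆ P.I j := by
    intro y hy
    obtain ⟨j', hj', hyj'⟩ := hmemI y hy
    rcases lt_trichotomy j' j with h | h | h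
    · exfalso
      have h1 : P.a (j' + 1) ≤ P.a j := P.a_le_a h hj.le
      have hmem : P.a (j' + 1) ∈ Ioo γ δ :=
        ⟨hy.1.trans hyj'.2, lt_of_le_of_lt (h1.trans hy₀.1.le) hy₀mem.2⟩
      exact hS _ hmem (P.S0_subset_S (P.a_mem_S0 hj'))
    · exact h ▸ hyj'
    · exfalso
      have h1 : P.a (j + 1) ≤ P.a j' := P.a_le_a h hj'.le
      have hmem : P.a (j + 1) ∈ Ioo γ δ :=
        ⟨hy₀mem.1.trans hy₀.2, lt_of_le_of_lt (h1.trans hyj'.1.le) hy.2⟩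
      exact hS _ hmem (P.S0_subset_S (P.a_mem_S0 hj))
  obtain ⟨haγ, hδb⟩ := (Ioo_subset_Ioo_iff hγδ).1 hsub
  have hγI : γ ∈ Icc (P.a j) (P.a (j + 1)) := ⟨haγ, hγδ.le.trans hδb⟩
  have hδI : δ ∈ Icc (P.a j) (P.a (j + 1)) := ⟨haγ.trans hγδ.le, hδb⟩
  have hcont : ContinuousOn (P.f j) (Icc γ δ) := (P.f_cont j hj).mono (Icc_subset_Icc haγ hδb)
  have hTS' : ∀ y ∈ Ioo γ δ, P.T y ∉ P.S := fun y hy =>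
    P.T_notMem_S (hIcc (Ioo_subset_Icc_self hy)) (P.I_not_S0 hj (hsub hy)) (hS y hy)
  refine ⟨j, hj, hsub, ?_⟩
  cases hb : P.inc j with
  | true =>
    refine ⟨P.f j γ, P.f j δ, P.f_mono j hj hb hγI hδI hγδ, ?_, ?_, ?_⟩
    · intro s hs
      exact ⟨(P.f_range j hj hγI).1.trans hs.1, hs.2.trans (P.f_range j hj hδI).2⟩
    · intro s hs hsS
      obtain ⟨y, hy, hfy⟩ := intermediate_value_Ioo hγδ.le hcont hs
      have he : P.T y = s := by rw [P.T_eq hj (hsub hy), hfy]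
      exact hTS' y hy (he ▸ hsS)
    · intro y hy
      rw [P.T_eq hj (hsub hy)]
      exact ⟨P.f_mono j hj hb hγI (Ioo_subset_Icc_self (hsub hy)) hy.1,
        P.f_mono j hj hb (Ioo_subset_Icc_self (hsub hy)) hδI hy.2⟩
  | false =>
    refine ⟨P.f j δ, P.f j γ, P.f_anti j hj hb hγI hδI hγδ, ?_, ?_, ?_⟩
    · intro s hs
      exact ⟨(P.f_range j hj hδI).1.trans hs.1, hs.2.trans (P.f_range j hj hγI).2⟩
    · intro s hs hsS
      obtain ⟨y, hy, hfy⟩ := intermediate_value_Ioo' hγδ.le hcont hs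
      have he : P.T y = s := by rw [P.T_eq hj (hsub hy), hfy]
      exact hTS' y hy (he ▸ hsS)
    · intro y hy
      rw [P.T_eq hj (hsub hy)]
      exact ⟨P.f_anti j hj (by exact hb) (Ioo_subset_Icc_self (hsub hy)) hδI hy.2,
        P.f_anti j hj hb hγI (Ioo_subset_Icc_self (hsub hy)) hy.1⟩

lemma code_const_on_interval {γ δ : ℝ} (hγδ : γ < δ) (hIcc : Icc γ δ ⊆ Icc (0:ℝ) 1)
    (hS : ∀ y ∈ Ioo γ δ, y ∉ P.S) (n : ℕ) :
    ∃ j, j < P.k ∧ ∀ y ∈ Ioo γ δ, P.T^[n] y ∈ P.I j := by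
  induction n generalizing γ δ with
  | zero =>
    obtain ⟨j, hj, hsub, -⟩ := P.interval_step hγδ hIcc hS
    exact ⟨j, hj, fun y hy => hsub hy⟩
  | succ n ih =>
    obtain ⟨j, hj, hsub, γ', δ', h1, h2, h3, h4⟩ := P.interval_step hγδ hIcc hS
    obtain ⟨j', hj', hmem⟩ := ih h1 h2 h3
    refine ⟨j', hj', fun y hy => ?_⟩
    rw [Function.iterate_succ_apply]
    exact hmem _ (h4 y hy)

lemma dense_of_valid (hV : P.Valid) : Icc (0:ℝ) 1 ⊆ closure P.S := by
  intro x₀ hx₀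
  by_contra hcl
  obtain ⟨ε, hε, hball⟩ : ∃ ε > 0, ∀ y ∈ P.S, ε ≤ dist x₀ y := by
    rw [Metric.mem_closure_iff] at hcl
    push_neg at hcl
    exact hcl
  have hd0 : ε ≤ x₀ := by
    have := hball 0 P.zero_mem_S
    rwa [Real.dist_eq, sub_zero, abs_of_nonneg hx₀.1] at this
  have hd1 : ε ≤ 1 - x₀ := by
    have := hball 1 P.one_mem_S
    rwa [Real.dist_eq, abs_sub_comm, abs_of_nonneg (by linarith [hx₀.2])] at this
  set γ := x₀ - ε / 2 with hγdef
  set δ := x₀ + ε / 2 with hδdef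
  have hγδ : γ < δ := by rw [hγdef, hδdef]; linarith
  have hIcc : Icc γ δ ⊆ Icc (0:ℝ) 1 := by
    intro y hy
    obtain ⟨h1, h2⟩ := hy
    rw [hγdef] at h1
    rw [hδdef] at h2
    exact ⟨by linarith, by linarith⟩
  have hSfree : ∀ y ∈ Ioo γ δ, y ∉ P.S := by
    intro y hy hyS
    have hb := hball y hyS
    rw [Real.dist_eq] at hb
    have h1 : |x₀ - y| < ε := by
      rw [abs_lt]
      constructor
      · have := hy.2; rw [hδdef] at this; linarith
      · have := hy.1; rw [hγdef] at this; linarith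
    linarith
  set y₁ := x₀ - ε / 4 with hy₁def
  set y₂ := x₀ + ε / 4 with hy₂def
  have hy₁ : y₁ ∈ Ioo γ δ := by
    rw [hy₁def, hγdef, hδdef]
    exact ⟨by linarith, by linarith⟩
  have hy₂ : y₂ ∈ Ioo γ δ := by
    rw [hy₂def, hγdef, hδdef]
    exact ⟨by linarith, by linarith⟩
  have hcode : P.code y₁ = P.code y₂ := by
    funext n
    obtain ⟨j, hj, hmem⟩ := P.code_const_on_interval hγδ hIcc hSfree n
    have e1 : P.code y₁ n = j := P.idx_eq hj (hmem y₁ hy₁)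
    have e2 : P.code y₂ n = j := P.idx_eq hj (hmem y₂ hy₂)
    rw [e1, e2]
  have hv₁ := hV y₁ ⟨hIcc (Ioo_subset_Icc_self hy₁), hSfree y₁ hy₁⟩
  have hv₂ := hV y₂ ⟨hIcc (Ioo_subset_Icc_self hy₂), hSfree y₂ hy₂⟩
  rw [hcode] at hv₁
  have heq : y₁ = y₂ := tendsto_nhds_unique hv₁ hv₂
  rw [hy₁def, hy₂def] at heq
  linarith

end PMS
namespace PMS

variable (P : PMS)

/-! ### Contraction implies validity -/

lemma image_I_inc {j : ℕ} (hj : j < P.k) (hinc : P.inc j = true) :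
    P.f j '' P.I j = Ioo (P.f j (P.a j)) (P.f j (P.a (j + 1))) := by
  have hab := (P.a_lt_succ hj).le
  apply Subset.antisymm
  · rintro _ ⟨y, hy, rfl⟩
    exact ⟨P.f_mono j hj hinc (left_mem_Icc.2 hab) (Ioo_subset_Icc_self hy) hy.1,
      P.f_mono j hj hinc (Ioo_subset_Icc_self hy) (right_mem_Icc.2 hab) hy.2⟩
  · exact intermediate_value_Ioo hab (P.f_cont j hj)

lemma image_I_anti {j : ℕ} (hj : j < P.k) (hinc : P.inc j = false) :
    P.f j '' P.I j = Ioo (P.f j (P.a (j + 1))) (P.f j (P.a j)) := by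
  have hab := (P.a_lt_succ hj).le
  apply Subset.antisymm
  · rintro _ ⟨y, hy, rfl⟩
    exact ⟨P.f_anti j hj hinc (Ioo_subset_Icc_self hy) (right_mem_Icc.2 hab) hy.2,
      P.f_anti j hj hinc (left_mem_Icc.2 hab) (Ioo_subset_Icc_self hy) hy.1⟩
  · exact intermediate_value_Ioo' hab (P.f_cont j hj)

lemma J_subset_Ioo01 {j : ℕ} (hj : j < P.k) : P.f j '' P.I j ⊆ Ioo (0:ℝ) 1 := by
  have hab := (P.a_lt_succ hj).le
  have h0 := P.f_range j hj (left_mem_Icc.2 hab)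
  have h1 := P.f_range j hj (right_mem_Icc.2 hab)
  cases hb : P.inc j with
  | true =>
    rw [P.image_I_inc hj hb]
    exact fun t ht => ⟨lt_of_le_of_lt h0.1 ht.1, lt_of_lt_of_le ht.2 h1.2⟩
  | false =>
    rw [P.image_I_anti hj hb]
    exact fun t ht => ⟨lt_of_le_of_lt h1.1 ht.1, lt_of_lt_of_le ht.2 h0.2⟩

lemma phiIdx_eq {j : ℕ} {t : ℝ} (hj : j < P.k) (ht : t ∈ P.f j '' P.I j) :
    P.phiIdx ((j:ℝ) + t) = j := by
  have hex : ∃ j', j' < P.k ∧ ((j:ℝ) + t) - (j':ℝ) ∈ P.f j' '' P.I j' :=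
    ⟨j, hj, by simpa using ht⟩
  rw [phiIdx, dif_pos hex]
  obtain ⟨h1, h2⟩ := hex.choose_spec
  have ht' := P.J_subset_Ioo01 h1 h2
  have htt := P.J_subset_Ioo01 hj ht
  have hA : (hex.choose : ℝ) < (j:ℝ) + 1 := by linarith [ht'.1, htt.2]
  have hB : (j:ℝ) < (hex.choose : ℝ) + 1 := by linarith [ht'.2, htt.1]
  have hA' : hex.choose < j + 1 := by exact_mod_cast hA
  have hB' : j < hex.choose + 1 := by exact_mod_cast hB
  omega

lemma phiMap_eq {j : ℕ} {t : ℝ} (hj : j < P.k) (ht : t ∈ P.f j '' P.I j) :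
    P.phiMap ((j:ℝ) + t) = P.g j t := by
  rw [phiMap, P.phiIdx_eq hj ht, add_sub_cancel_left]

lemma g_lip {φ' : ℝ → ℝ} {c : ℝ}
    (hyp : ∀ x ∈ P.domPhi, HasDerivWithinAt P.phiMap (φ' x) P.domPhi x ∧ |φ' x| ≤ c)
    {j : ℕ} (hj : j < P.k) {t t' : ℝ} (ht : t ∈ P.f j '' P.I j) (ht' : t' ∈ P.f j '' P.I j) :
    |P.g j t - P.g j t'| ≤ c * |t - t'| := by
  set s : Set ℝ := (fun u => (j:ℝ) + u) '' (P.f j '' P.I j) with hsdef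
  have hsdom : s ⊆ P.domPhi := fun u hu => Set.mem_biUnion (Finset.mem_range.2 hj) hu
  have hconv : Convex ℝ s := by
    cases hb : P.inc j with
    | true => rw [hsdef, P.image_I_inc hj hb, image_const_add_Ioo]; exact convex_Ioo _ _
    | false => rw [hsdef, P.image_I_anti hj hb, image_const_add_Ioo]; exact convex_Ioo _ _
  have hmt : (j:ℝ) + t ∈ s := ⟨t, ht, rfl⟩
  have hmt' : (j:ℝ) + t' ∈ s := ⟨t', ht', rfl⟩
  have key := Convex.norm_image_sub_le_of_norm_hasDerivWithin_le
    (fun u hu => ((hyp u (hsdom hu)).1).mono hsdom)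
    (fun u hu => by simpa [Real.norm_eq_abs] using (hyp u (hsdom hu)).2)
    hconv hmt' hmt
  rw [P.phiMap_eq hj ht, P.phiMap_eq hj ht'] at key
  simpa [Real.norm_eq_abs, add_sub_add_left_eq_sub] using key

section Lip

variable {c : ℝ}

lemma g_boundary_low_inc {j : ℕ} (hj : j < P.k) (hinc : P.inc j = true) (hc : 0 ≤ c)
    (hlip : ∀ t ∈ P.f j '' P.I j, ∀ t' ∈ P.f j '' P.I j, |P.g j t - P.g j t'| ≤ c * |t - t'|)
    {t : ℝ} (ht : t ∈ Ioo (P.f j (P.a j)) (P.f j (P.a (j + 1)))) :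
    P.g j t - P.a j ≤ c * (t - P.f j (P.a j)) := by
  obtain ⟨s, hs, hfs, hgs⟩ := P.mid_preimage_inc hj hinc ht
  rw [hgs]
  by_contra hcon
  push_neg at hcon
  set ε := s - P.a j - c * (t - P.f j (P.a j)) with hεdef
  have hε : 0 < ε := by rw [hεdef]; linarith
  have hmin : P.a j < min s (P.a j + ε) := lt_min hs.1 (by linarith)
  set s' := (P.a j + min s (P.a j + ε)) / 2 with hs'def
  have hs'1 : P.a j < s' := by rw [hs'def]; linarith [hmin]
  have hs'2 : s' < s := by
    have := min_le_left s (P.a j + ε); rw [hs'def]; linarith [hmin]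
  have hs'3 : s' < P.a j + ε := by
    have := min_le_right s (P.a j + ε); rw [hs'def]; linarith [hmin]
  have hs'I : s' ∈ P.I j := ⟨hs'1, hs'2.trans hs.2⟩
  have ht'J : P.f j s' ∈ P.f j '' P.I j := ⟨s', hs'I, rfl⟩
  have htJ : t ∈ P.f j '' P.I j := ⟨s, hs, hfs⟩
  have hgt' : P.g j (P.f j s') = s' := P.g_inv j hj s' (Ioo_subset_Icc_self hs'I)
  have hlt : P.f j (P.a j) < P.f j s' :=
    P.f_mono j hj hinc (left_mem_Icc.2 (P.a_lt_succ hj).le) (Ioo_subset_Icc_self hs'I) hs'1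
  have hlt2 : P.f j s' < t := by
    rw [← hfs]
    exact P.f_mono j hj hinc (Ioo_subset_Icc_self hs'I) (Ioo_subset_Icc_self hs) hs'2
  have h := hlip t htJ (P.f j s') ht'J
  rw [hgs, hgt'] at h
  rw [abs_of_nonneg (by linarith : (0:ℝ) ≤ s - s'),
    abs_of_nonneg (by linarith : (0:ℝ) ≤ t - P.f j s')] at h
  have h2 : c * (t - P.f j s') ≤ c * (t - P.f j (P.a j)) :=
    mul_le_mul_of_nonneg_left (by linarith) hc
  linarith

lemma g_boundary_high_inc {j : ℕ} (hj : j < P.k) (hinc : P.inc j = true) (hc : 0 ≤ c)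
    (hlip : ∀ t ∈ P.f j '' P.I j, ∀ t' ∈ P.f j '' P.I j, |P.g j t - P.g j t'| ≤ c * |t - t'|)
    {t : ℝ} (ht : t ∈ Ioo (P.f j (P.a j)) (P.f j (P.a (j + 1)))) :
    P.a (j + 1) - P.g j t ≤ c * (P.f j (P.a (j + 1)) - t) := by
  obtain ⟨s, hs, hfs, hgs⟩ := P.mid_preimage_inc hj hinc ht
  rw [hgs]
  by_contra hcon
  push_neg at hcon
  set ε := P.a (j + 1) - s - c * (P.f j (P.a (j + 1)) - t) with hεdef
  have hε : 0 < ε := by rw [hεdef]; linarith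
  have hmax : max s (P.a (j + 1) - ε) < P.a (j + 1) := max_lt hs.2 (by linarith)
  set s' := (max s (P.a (j + 1) - ε) + P.a (j + 1)) / 2 with hs'def
  have hs'1 : s' < P.a (j + 1) := by rw [hs'def]; linarith [hmax]
  have hs'2 : s < s' := by
    have := le_max_left s (P.a (j + 1) - ε); rw [hs'def]; linarith [hmax]
  have hs'3 : P.a (j + 1) - ε < s' := by
    have := le_max_right s (P.a (j + 1) - ε); rw [hs'def]; linarith [hmax]
  have hs'I : s' ∈ P.I j := ⟨hs.1.trans hs'2, hs'1⟩
  have ht'J : P.f j s' ∈ P.f j '' P.I j := ⟨s', hs'I, rfl⟩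
  have htJ : t ∈ P.f j '' P.I j := ⟨s, hs, hfs⟩
  have hgt' : P.g j (P.f j s') = s' := P.g_inv j hj s' (Ioo_subset_Icc_self hs'I)
  have hlt : P.f j s' < P.f j (P.a (j + 1)) :=
    P.f_mono j hj hinc (Ioo_subset_Icc_self hs'I) (right_mem_Icc.2 (P.a_lt_succ hj).le) hs'1
  have hlt2 : t < P.f j s' := by
    rw [← hfs]
    exact P.f_mono j hj hinc (Ioo_subset_Icc_self hs) (Ioo_subset_Icc_self hs'I) hs'2
  have h := hlip (P.f j s') ht'J t htJ
  rw [hgs, hgt'] at h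
  rw [abs_of_nonneg (by linarith : (0:ℝ) ≤ s' - s),
    abs_of_nonneg (by linarith : (0:ℝ) ≤ P.f j s' - t)] at h
  have h2 : c * (P.f j s' - t) ≤ c * (P.f j (P.a (j + 1)) - t) :=
    mul_le_mul_of_nonneg_left (by linarith) hc
  linarith

lemma g_boundary_low_anti {j : ℕ} (hj : j < P.k) (hinc : P.inc j = false) (hc : 0 ≤ c)
    (hlip : ∀ t ∈ P.f j '' P.I j, ∀ t' ∈ P.f j '' P.I j, |P.g j t - P.g j t'| ≤ c * |t - t'|)
    {t : ℝ} (ht : t ∈ Ioo (P.f j (P.a (j + 1))) (P.f j (P.a j))) :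
    P.a (j + 1) - P.g j t ≤ c * (t - P.f j (P.a (j + 1))) := by
  obtain ⟨s, hs, hfs, hgs⟩ := P.mid_preimage_anti hj hinc ht
  rw [hgs]
  by_contra hcon
  push_neg at hcon
  set ε := P.a (j + 1) - s - c * (t - P.f j (P.a (j + 1))) with hεdef
  have hε : 0 < ε := by rw [hεdef]; linarith
  have hmax : max s (P.a (j + 1) - ε) < P.a (j + 1) := max_lt hs.2 (by linarith)
  set s' := (max s (P.a (j + 1) - ε) + P.a (j + 1)) / 2 with hs'def
  have hs'1 : s' < P.a (j + 1) := by rw [hs'def]; linarith [hmax]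
  have hs'2 : s < s' := by
    have := le_max_left s (P.a (j + 1) - ε); rw [hs'def]; linarith [hmax]
  have hs'3 : P.a (j + 1) - ε < s' := by
    have := le_max_right s (P.a (j + 1) - ε); rw [hs'def]; linarith [hmax]
  have hs'I : s' ∈ P.I j := ⟨hs.1.trans hs'2, hs'1⟩
  have ht'J : P.f j s' ∈ P.f j '' P.I j := ⟨s', hs'I, rfl⟩
  have htJ : t ∈ P.f j '' P.I j := ⟨s, hs, hfs⟩
  have hgt' : P.g j (P.f j s') = s' := P.g_inv j hj s' (Ioo_subset_Icc_self hs'I)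
  have hlt : P.f j (P.a (j + 1)) < P.f j s' :=
    P.f_anti j hj hinc (Ioo_subset_Icc_self hs'I) (right_mem_Icc.2 (P.a_lt_succ hj).le) hs'1
  have hlt2 : P.f j s' < t := by
    rw [← hfs]
    exact P.f_anti j hj hinc (Ioo_subset_Icc_self hs) (Ioo_subset_Icc_self hs'I) hs'2
  have h := hlip (P.f j s') ht'J t htJ
  rw [hgs, hgt'] at h
  rw [abs_of_nonneg (by linarith : (0:ℝ) ≤ s' - s),
    abs_of_nonpos (by linarith : P.f j s' - t ≤ 0)] at h
  have h2 : c * (t - P.f j s') ≤ c * (t - P.f j (P.a (j + 1))) :=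
    mul_le_mul_of_nonneg_left (by linarith) hc
  have h3 : -(P.f j s' - t) = t - P.f j s' := by ring
  rw [h3] at h
  linarith

lemma g_boundary_high_anti {j : ℕ} (hj : j < P.k) (hinc : P.inc j = false) (hc : 0 ≤ c)
    (hlip : ∀ t ∈ P.f j '' P.I j, ∀ t' ∈ P.f j '' P.I j, |P.g j t - P.g j t'| ≤ c * |t - t'|)
    {t : ℝ} (ht : t ∈ Ioo (P.f j (P.a (j + 1))) (P.f j (P.a j))) :
    P.g j t - P.a j ≤ c * (P.f j (P.a j) - t) := by
  obtain ⟨s, hs, hfs, hgs⟩ := P.mid_preimage_anti hj hinc ht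
  rw [hgs]
  by_contra hcon
  push_neg at hcon
  set ε := s - P.a j - c * (P.f j (P.a j) - t) with hεdef
  have hε : 0 < ε := by rw [hεdef]; linarith
  have hmin : P.a j < min s (P.a j + ε) := lt_min hs.1 (by linarith)
  set s' := (P.a j + min s (P.a j + ε)) / 2 with hs'def
  have hs'1 : P.a j < s' := by rw [hs'def]; linarith [hmin]
  have hs'2 : s' < s := by
    have := min_le_left s (P.a j + ε); rw [hs'def]; linarith [hmin]
  have hs'3 : s' < P.a j + ε := by
    have := min_le_right s (P.a j + ε); rw [hs'def]; linarith [hmin]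
  have hs'I : s' ∈ P.I j := ⟨hs'1, hs'2.trans hs.2⟩
  have ht'J : P.f j s' ∈ P.f j '' P.I j := ⟨s', hs'I, rfl⟩
  have htJ : t ∈ P.f j '' P.I j := ⟨s, hs, hfs⟩
  have hgt' : P.g j (P.f j s') = s' := P.g_inv j hj s' (Ioo_subset_Icc_self hs'I)
  have hlt : P.f j s' < P.f j (P.a j) :=
    P.f_anti j hj hinc (left_mem_Icc.2 (P.a_lt_succ hj).le) (Ioo_subset_Icc_self hs'I) hs'1
  have hlt2 : t < P.f j s' := by
    rw [← hfs]
    exact P.f_anti j hj hinc (Ioo_subset_Icc_self hs'I) (Ioo_subset_Icc_self hs) hs'2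
  have h := hlip t htJ (P.f j s') ht'J
  rw [hgs, hgt'] at h
  rw [abs_of_nonneg (by linarith : (0:ℝ) ≤ s - s'),
    abs_of_nonpos (by linarith : t - P.f j s' ≤ 0)] at h
  have h2 : c * (P.f j s' - t) ≤ c * (P.f j (P.a j) - t) :=
    mul_le_mul_of_nonneg_left (by linarith) hc
  have h3 : -(t - P.f j s') = P.f j s' - t := by ring
  rw [h3] at h
  linarith

lemma phibarJ_lip_aux_inc (hc : 0 ≤ c) {j : ℕ} (hj : j < P.k) (hinc : P.inc j = true)
    (hlip : ∀ t ∈ P.f j '' P.I j, ∀ t' ∈ P.f j '' P.I j, |P.g j t - P.g j t'| ≤ c * |t - t'|)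
    {t t' : ℝ} (h : t' ≤ t) :
    |P.phibarJ j t - P.phibarJ j t'| ≤ c * (t - t') := by
  have hJ := P.image_I_inc hj hinc
  have hAB : P.f j (P.a j) < P.f j (P.a (j + 1)) := P.fA_lt_fB hj hinc
  have hmid : (P.f j (P.a j) + P.f j (P.a (j + 1))) / 2
      ∈ Ioo (P.f j (P.a j)) (P.f j (P.a (j + 1))) := ⟨by linarith, by linarith⟩
  have hend : P.a (j + 1) - P.a j
      ≤ c * (P.f j (P.a (j + 1)) - P.f j (P.a j)) := by
    have e1 := P.g_boundary_low_inc hj hinc hc hlip hmid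
    have e2 := P.g_boundary_high_inc hj hinc hc hlip hmid
    linarith
  rcases le_or_gt t (P.f j (P.a j)) with h1 | h1
  · rw [P.phibarJ_low_inc hinc h1, P.phibarJ_low_inc hinc (h.trans h1), sub_self, abs_zero]
    exact mul_nonneg hc (by linarith)
  rcases le_or_gt (P.f j (P.a (j + 1))) t with h2 | h2
  · rw [P.phibarJ_high_inc hj hinc h2]
    rcases le_or_gt t' (P.f j (P.a j)) with h3 | h3
    · rw [P.phibarJ_low_inc hinc h3,
        abs_of_nonneg (by linarith [P.a_lt_succ hj] : (0:ℝ) ≤ P.a (j + 1) - P.a j)]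
      have := mul_le_mul_of_nonneg_left
        (by linarith : P.f j (P.a (j + 1)) - P.f j (P.a j) ≤ t - t') hc
      linarith
    rcases le_or_gt (P.f j (P.a (j + 1))) t' with h4 | h4
    · rw [P.phibarJ_high_inc hj hinc h4, sub_self, abs_zero]
      exact mul_nonneg hc (by linarith)
    · have hm : t' ∈ Ioo (P.f j (P.a j)) (P.f j (P.a (j + 1))) := ⟨h3, h4⟩
      rw [P.phibarJ_mid_inc hinc hm]
      have e := P.g_boundary_high_inc hj hinc hc hlip hm
      obtain ⟨s, hs, -, hgs⟩ := P.mid_preimage_inc hj hinc hm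
      rw [abs_of_nonneg (by rw [hgs]; linarith [hs.2])]
      have := mul_le_mul_of_nonneg_left
        (by linarith : P.f j (P.a (j + 1)) - t' ≤ t - t') hc
      linarith
  · have hmt : t ∈ Ioo (P.f j (P.a j)) (P.f j (P.a (j + 1))) := ⟨h1, h2⟩
    rw [P.phibarJ_mid_inc hinc hmt]
    obtain ⟨s, hs, hfs, hgs⟩ := P.mid_preimage_inc hj hinc hmt
    rcases le_or_gt t' (P.f j (P.a j)) with h3 | h3
    · rw [P.phibarJ_low_inc hinc h3]
      have e := P.g_boundary_low_inc hj hinc hc hlip hmt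
      rw [abs_of_nonneg (by rw [hgs]; linarith [hs.1])]
      have := mul_le_mul_of_nonneg_left
        (by linarith : t - P.f j (P.a j) ≤ t - t') hc
      linarith
    · have hmt' : t' ∈ Ioo (P.f j (P.a j)) (P.f j (P.a (j + 1))) := ⟨h3, lt_of_le_of_lt h h2⟩
      rw [P.phibarJ_mid_inc hinc hmt']
      have hh := hlip t (by rw [hJ]; exact hmt) t' (by rw [hJ]; exact hmt')
      rwa [abs_of_nonneg (by linarith : (0:ℝ) ≤ t - t')] at hh

lemma phibarJ_lip_aux_anti (hc : 0 ≤ c) {j : ℕ} (hj : j < P.k) (hinc : P.inc j = false)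
    (hlip : ∀ t ∈ P.f j '' P.I j, ∀ t' ∈ P.f j '' P.I j, |P.g j t - P.g j t'| ≤ c * |t - t'|)
    {t t' : ℝ} (h : t' ≤ t) :
    |P.phibarJ j t - P.phibarJ j t'| ≤ c * (t - t') := by
  have hJ := P.image_I_anti hj hinc
  have hAB : P.f j (P.a (j + 1)) < P.f j (P.a j) := P.fB_lt_fA hj hinc
  have hmid : (P.f j (P.a (j + 1)) + P.f j (P.a j)) / 2
      ∈ Ioo (P.f j (P.a (j + 1))) (P.f j (P.a j)) := ⟨by linarith, by linarith⟩
  have hend : P.a (j + 1) - P.a j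
      ≤ c * (P.f j (P.a j) - P.f j (P.a (j + 1))) := by
    have e1 := P.g_boundary_low_anti hj hinc hc hlip hmid
    have e2 := P.g_boundary_high_anti hj hinc hc hlip hmid
    linarith
  rcases le_or_gt t (P.f j (P.a (j + 1))) with h1 | h1
  · rw [P.phibarJ_low_anti hinc h1, P.phibarJ_low_anti hinc (h.trans h1), sub_self, abs_zero]
    exact mul_nonneg hc (by linarith)
  rcases le_or_gt (P.f j (P.a j)) t with h2 | h2
  · rw [P.phibarJ_high_anti hj hinc h2]
    rcases le_or_gt t' (P.f j (P.a (j + 1))) with h3 | h3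
    · rw [P.phibarJ_low_anti hinc h3,
        abs_of_nonpos (by linarith [P.a_lt_succ hj] : P.a j - P.a (j + 1) ≤ 0)]
      have := mul_le_mul_of_nonneg_left
        (by linarith : P.f j (P.a j) - P.f j (P.a (j + 1)) ≤ t - t') hc
      have h5 : -(P.a j - P.a (j + 1)) = P.a (j + 1) - P.a j := by ring
      rw [h5]
      linarith
    rcases le_or_gt (P.f j (P.a j)) t' with h4 | h4
    · rw [P.phibarJ_high_anti hj hinc h4, sub_self, abs_zero]
      exact mul_nonneg hc (by linarith)
    · have hm : t' ∈ Ioo (P.f j (P.a (j + 1))) (P.f j (P.a j)) := ⟨h3, h4⟩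
      rw [P.phibarJ_mid_anti hinc hm]
      have e := P.g_boundary_high_anti hj hinc hc hlip hm
      obtain ⟨s, hs, -, hgs⟩ := P.mid_preimage_anti hj hinc hm
      rw [abs_of_nonpos (by rw [hgs]; linarith [hs.1])]
      have := mul_le_mul_of_nonneg_left
        (by linarith : P.f j (P.a j) - t' ≤ t - t') hc
      have h5 : -(P.a j - P.g j t') = P.g j t' - P.a j := by ring
      rw [h5]
      linarith
  · have hmt : t ∈ Ioo (P.f j (P.a (j + 1))) (P.f j (P.a j)) := ⟨h1, h2⟩
    rw [P.phibarJ_mid_anti hinc hmt]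
    obtain ⟨s, hs, hfs, hgs⟩ := P.mid_preimage_anti hj hinc hmt
    rcases le_or_gt t' (P.f j (P.a (j + 1))) with h3 | h3
    · rw [P.phibarJ_low_anti hinc h3]
      have e := P.g_boundary_low_anti hj hinc hc hlip hmt
      rw [abs_of_nonpos (by rw [hgs]; linarith [hs.2])]
      have := mul_le_mul_of_nonneg_left
        (by linarith : t - P.f j (P.a (j + 1)) ≤ t - t') hc
      have h5 : -(P.g j t - P.a (j + 1)) = P.a (j + 1) - P.g j t := by ring
      rw [h5]
      linarith
    · have hmt' : t' ∈ Ioo (P.f j (P.a (j + 1))) (P.f j (P.a j)) := ⟨h3, lt_of_le_of_lt h h2⟩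
      rw [P.phibarJ_mid_anti hinc hmt']
      have hh := hlip t (by rw [hJ]; exact hmt) t' (by rw [hJ]; exact hmt')
      rwa [abs_of_nonneg (by linarith : (0:ℝ) ≤ t - t')] at hh

lemma phibarJ_lip (hc : 0 ≤ c) {j : ℕ} (hj : j < P.k)
    (hlip : ∀ t ∈ P.f j '' P.I j, ∀ t' ∈ P.f j '' P.I j, |P.g j t - P.g j t'| ≤ c * |t - t'|)
    (t t' : ℝ) : |P.phibarJ j t - P.phibarJ j t'| ≤ c * |t - t'| := by
  have main : ∀ u v : ℝ, v ≤ u → |P.phibarJ j u - P.phibarJ j v| ≤ c * (u - v) := by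
    intro u v huv
    cases hb : P.inc j with
    | true => exact P.phibarJ_lip_aux_inc hc hj hb hlip huv
    | false => exact P.phibarJ_lip_aux_anti hc hj hb hlip huv
  rcases le_total t' t with h | h
  · rw [abs_of_nonneg (by linarith : (0:ℝ) ≤ t - t')]
    exact main t t' h
  · rw [abs_sub_comm (P.phibarJ j t), abs_sub_comm t t',
      abs_of_nonneg (by linarith : (0:ℝ) ≤ t' - t)]
    exact main t' t h

end Lip

lemma valid_of_contraction {φ' : ℝ → ℝ} {c : ℝ} (hc1 : c < 1)
    (hyp : ∀ x ∈ P.domPhi, HasDerivWithinAt P.phiMap (φ' x) P.domPhi x ∧ |φ' x| ≤ c) :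
    P.Valid := by
  have hk0 : 0 < P.k := lt_of_lt_of_le two_pos P.two_le_k
  have hI0 : P.a 0 < P.a 1 := P.a_lt_succ hk0
  have hy₀ : (P.a 0 + P.a 1) / 2 ∈ P.I 0 := ⟨by linarith, by linarith⟩
  have hdom : ((0:ℕ):ℝ) + P.f 0 ((P.a 0 + P.a 1) / 2) ∈ P.domPhi :=
    Set.mem_biUnion (Finset.mem_range.2 hk0)
      ⟨P.f 0 ((P.a 0 + P.a 1) / 2), ⟨(P.a 0 + P.a 1) / 2, hy₀, rfl⟩, rfl⟩
  have hc0 : 0 ≤ c := le_trans (abs_nonneg _) (hyp _ hdom).2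
  have hlipJ : ∀ j, j < P.k → ∀ t t', |P.phibarJ j t - P.phibarJ j t'| ≤ c * |t - t'| :=
    fun j hj => P.phibarJ_lip hc0 hj (fun t ht t' ht' => P.g_lip hyp hj ht ht')
  intro x hx
  have key : ∀ n, ∀ y ∈ Icc (0:ℝ) 1 \ P.S, |P.PsiN n (P.code y) 0 - y| ≤ c ^ n := by
    intro n
    induction n with
    | zero =>
      intro y hy
      simp only [PsiN, pow_zero]
      rw [abs_sub_comm, abs_of_nonneg (by linarith [hy.1.1] : (0:ℝ) ≤ y - 0)]
      linarith [hy.1.2]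
    | succ n ih =>
      intro y hy
      have h0 := P.orbit_spec hy 0
      have hTy := P.T_mem_diff hy
      have h00 : y ∈ P.I (P.code y 0) := h0.2.2
      have hfix : P.phibarJ (P.code y 0) (P.T y) = y := by
        have hT : P.T y = P.f (P.code y 0) y := P.T_eq h0.2.1 h00
        rw [hT]
        exact P.phibarJ_fixed h0.2.1 h00
      have e : P.PsiN (n + 1) (P.code y) 0
          = P.phibarJ (P.code y 0) (P.PsiN n (P.code (P.T y)) 0) := by
        simp only [PsiN]
        rw [← P.code_shift y]
      rw [e]
      calc |P.phibarJ (P.code y 0) (P.PsiN n (P.code (P.T y)) 0) - y|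
          = |P.phibarJ (P.code y 0) (P.PsiN n (P.code (P.T y)) 0)
              - P.phibarJ (P.code y 0) (P.T y)| := by rw [hfix]
        _ ≤ c * |P.PsiN n (P.code (P.T y)) 0 - P.T y| := hlipJ _ h0.2.1 _ _
        _ ≤ c * c ^ n := mul_le_mul_of_nonneg_left (ih (P.T y) hTy) hc0
        _ = c ^ (n + 1) := by ring
  have habs : ∀ n, |P.phibarN n (P.code x) - x| ≤ c ^ n := fun n => by
    rw [P.phibarN_eq_PsiN]
    exact key n x hx
  have hcn : Tendsto (fun n => c ^ n) atTop (𝓝 0) :=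
    tendsto_pow_atTop_nhds_zero_of_lt_one hc0 hc1
  have h0 : Tendsto (fun n => P.phibarN n (P.code x) - x) atTop (𝓝 0) :=
    squeeze_zero_norm (fun n => by simpa [Real.norm_eq_abs] using habs n) hcn
  exact tendsto_sub_nhds_zero_iff.1 h0

end PMS
/-- **Validity criterion via density (Parry).** In the piecewise monotone setting, the
φ-expansion is valid if and only if the set `S` is dense in `[0,1]`. Moreover, if `φ`
is differentiable on its domain and `sup |φ′| < 1`, then the φ-expansion is valid. -/
theorem validity_iff_dense (P : PMS) :
    (P.Valid ↔ Set.Icc (0 : ℝ) 1 ⊆ closure P.S) ∧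
    (∀ φ' : ℝ → ℝ, ∀ c : ℝ, c < 1 →
      (∀ x ∈ P.domPhi, HasDerivWithinAt P.phiMap (φ' x) P.domPhi x ∧ |φ' x| ≤ c) →
      P.Valid) := by
  exact ⟨⟨P.dense_of_valid, P.valid_of_dense⟩,
    fun φ' c hc1 hyp => P.valid_of_contraction hc1 hyp⟩
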